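/- Let P be a dag, T a dag tree decomposition of P rooted at bag B with children subtrees over bags B_1,...,B_l, and G a dag. For any fixed homomorphism φ_B : P(B) → G, there is a bijection between the set of homomorphisms P(B̄) → G extending φ_B and the product over i of the sets of homomorphisms P(B̄_i) → G extending φ_B. Consequently hom(P(B̄), G, φ_B) = Π_{i=1}^l hom(P(B̄_i), G, φ_B). -/

import Mathlib

/-- A source of a digraph (relation `r`): a vertex with no incoming arc. -/
def IsSource {V : Type*} (r : V → V → Prop) (v : V) : Prop := ∀ u, ¬ r u v

/-- A digraph is acyclic if it has no directed cycle. -/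
def DigraphAcyclic {V : Type*} (r : V → V → Prop) : Prop :=
  ∀ v, ¬ Relation.TransGen r v v

/-- `r` is an orientation of the simple graph `G`: every edge gets exactly one direction. -/
def IsOrientationOf {V : Type*} (G : SimpleGraph V) (r : V → V → Prop) : Prop :=
  (∀ u v, G.Adj u v ↔ (r u v ∨ r v u)) ∧ ∀ u v, r u v → ¬ r v u

/-- The set of vertices of the digraph `r` reachable from the vertex set `X`. -/
def Reach {V : Type*} (r : V → V → Prop) (X : Set V) : Set V :=
  {v | ∃ u ∈ X, Relation.ReflTransGen r u v}

/-- A dag tree decomposition of the dag `r`: a tree `T` whose nodes carry bags of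
sources of `r`, covering all sources, such that whenever a node `i` lies on the tree
path between nodes `j` and `k`, the sets reachable from the bags of `j` and `k`
intersect only inside the set reachable from the bag of `i`. -/
structure IsDTD {V ι : Type*} (r : V → V → Prop) (T : SimpleGraph ι)
    (bag : ι → Set V) : Prop where
  isTree : T.IsTree
  bag_subset_sources : ∀ i, bag i ⊆ {v | IsSource r v}
  bag_union : (⋃ i, bag i) = {v | IsSource r v}
  path_prop : ∀ (i j k : ι) (p : T.Walk j k), p.IsPath → i ∈ p.support →
    Reach r (bag j) ∩ Reach r (bag k) ⊆ Reach r (bag i)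

/-- `j` belongs to the subtree of `T` (rooted at `ρ`) rooted at `i`:
every path from the root `ρ` to `j` passes through `i`. -/
def InSubtree {ι : Type*} (T : SimpleGraph ι) (ρ i j : ι) : Prop :=
  ∀ p : T.Walk ρ j, p.IsPath → i ∈ p.support

/-- `i` is a child of `b` in the tree `T` rooted at `ρ`. -/
def IsChild {ι : Type*} (T : SimpleGraph ι) (ρ b i : ι) : Prop :=
  T.Adj b i ∧ InSubtree T ρ b i

/-- The down-closure of the node `i`: the union of all bags in the subtree rooted
at `i`. -/
def DownClosure {V ι : Type*} (T : SimpleGraph ι) (ρ : ι) (bag : ι → Set V)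
    (i : ι) : Set V :=
  ⋃ j ∈ {j | InSubtree T ρ i j}, bag j
section DTDWalkAux
open SimpleGraph Walk
set_option linter.unusedSectionVars false
variable {ι : Type*} {T : SimpleGraph ι} [DecidableEq ι]

private lemma support_take_drop' {u v x : ι} (p : T.Walk u v) (h : x ∈ p.support) :
    p.support = (p.takeUntil x h).support ++ (p.dropUntil x h).support.tail := by
  conv_lhs => rw [← p.take_spec h]
  rw [support_append]

private lemma mem_takeUntil_or' {u v : ι} (p : T.Walk u v) {x y : ι}
    (hx : x ∈ p.support) (hy : y ∈ p.support) :
    x ∈ (p.takeUntil y hy).support ∨ y ∈ (p.takeUntil x hx).support := by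
  induction p with
  | nil =>
    simp only [support_nil, List.mem_singleton] at hx hy
    subst hx; subst hy
    left; exact start_mem_support _
  | @cons a c w hadj q ih =>
    by_cases hxa : x = a
    · subst hxa; left; exact start_mem_support _
    by_cases hya : y = a
    · subst hya; right; exact start_mem_support _
    have hx' : x ∈ q.support := by simpa [hxa] using hx
    have hy' : y ∈ q.support := by simpa [hya] using hy
    have h1 : (cons hadj q).takeUntil y hy = cons hadj (q.takeUntil y hy') := by
      simp [Walk.takeUntil, Ne.symm hya]
    have h2 : (cons hadj q).takeUntil x hx = cons hadj (q.takeUntil x hx') := by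
      simp [Walk.takeUntil, Ne.symm hxa]
    rw [h1, h2]
    rcases ih hx' hy' with h | h
    · left; simp [h]
    · right; simp [h]

private lemma end_not_mem_takeUntil' {u v x : ι} {p : T.Walk u v} (hp : p.IsPath)
    (hx : x ∈ p.support) (hxv : x ≠ v) : v ∉ (p.takeUntil x hx).support := by
  have hsplit := support_take_drop' p hx
  have hnd : p.support.Nodup := hp.support_nodup
  rw [hsplit] at hnd
  have hdisj := (List.nodup_append'.mp hnd).2.2
  intro hmem
  have hv : v ∈ (p.dropUntil x hx).support := end_mem_support _
  have hv' : v ∈ (p.dropUntil x hx).support.tail := by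
    have := support_eq_cons (p.dropUntil x hx)
    rw [this] at hv
    rcases List.mem_cons.mp hv with h | h
    · exact absurd h.symm hxv
    · exact h
  exact hdisj hmem hv'

noncomputable def upPath (hT : T.IsTree) (ρ j : ι) : T.Walk ρ j :=
  (hT.existsUnique_path ρ j).choose

lemma upPath_isPath (hT : T.IsTree) (ρ j : ι) : (upPath hT ρ j).IsPath :=
  (hT.existsUnique_path ρ j).choose_spec.1

lemma upPath_unique (hT : T.IsTree) {ρ j : ι} (p : T.Walk ρ j) (hp : p.IsPath) :
    p = upPath hT ρ j :=
  (hT.existsUnique_path ρ j).choose_spec.2 p hp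

lemma inSubtree_iff (hT : T.IsTree) {ρ i j : ι} :
    InSubtree T ρ i j ↔ i ∈ (upPath hT ρ j).support := by
  constructor
  · exact fun h => h _ (upPath_isPath hT ρ j)
  · intro h p hp
    rw [upPath_unique hT p hp]; exact h

variable (hT : T.IsTree) {ρ : ι}

lemma upPath_prefix {x j : ι} (hx : x ∈ (upPath hT ρ j).support) :
    upPath hT ρ x = (upPath hT ρ j).takeUntil x hx :=
  (upPath_unique hT _ ((upPath_isPath hT ρ j).takeUntil hx)).symm

lemma anc_trans {x y j : ι} (hxy : x ∈ (upPath hT ρ y).support)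
    (hyj : y ∈ (upPath hT ρ j).support) : x ∈ (upPath hT ρ j).support := by
  have := upPath_prefix hT hyj
  rw [this] at hxy
  exact support_takeUntil_subset _ _ hxy

lemma anc_total {x y j : ι} (hx : x ∈ (upPath hT ρ j).support)
    (hy : y ∈ (upPath hT ρ j).support) :
    x ∈ (upPath hT ρ y).support ∨ y ∈ (upPath hT ρ x).support := by
  rcases mem_takeUntil_or' (upPath hT ρ j) hx hy with h | h
  · left; rw [upPath_prefix hT hy]; exact h
  · right; rw [upPath_prefix hT hx]; exact h

lemma anc_antisymm {x y : ι} (hxy : x ∈ (upPath hT ρ y).support)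
    (hyx : y ∈ (upPath hT ρ x).support) : x = y := by
  by_contra hne
  have h1 : x ∉ ((upPath hT ρ x).takeUntil y hyx).support :=
    end_not_mem_takeUntil' (upPath_isPath hT ρ x) hyx (Ne.symm hne)
  rw [← upPath_prefix hT hyx] at h1
  exact h1 hxy

lemma upPath_child {b i : ι} (hadj : T.Adj b i) (hbi : b ∈ (upPath hT ρ i).support) :
    upPath hT ρ i = (upPath hT ρ b).concat hadj := by
  have hib : i ∉ (upPath hT ρ b).support := by
    intro hib
    exact hadj.ne (anc_antisymm hT hbi hib)
  refine (upPath_unique hT _ ?_).symm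
  rw [Walk.isPath_def, support_concat, List.nodup_append']
  refine ⟨(upPath_isPath hT ρ b).support_nodup, List.nodup_singleton _, ?_⟩
  intro a ha ha'
  rw [List.mem_singleton] at ha'
  subst ha'
  exact hib ha

lemma support_upPath_child {b i : ι} (hadj : T.Adj b i) (hbi : b ∈ (upPath hT ρ i).support) :
    (upPath hT ρ i).support = (upPath hT ρ b).support ++ [i] := by
  rw [upPath_child hT hadj hbi, support_concat]

lemma exists_child_aux {b j : ι} (hbj : b ∈ (upPath hT ρ j).support) (hne : j ≠ b) :
    ∃ i, T.Adj b i ∧ b ∈ (upPath hT ρ i).support ∧ i ∈ (upPath hT ρ j).support := by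
  set p := upPath hT ρ j with hp
  have hq : ¬ (p.dropUntil b hbj).Nil := not_nil_of_ne (Ne.symm hne)
  rw [Walk.not_nil_iff] at hq
  obtain ⟨i, hadj, q', hq'⟩ := hq
  refine ⟨i, hadj, ?_, ?_⟩
  · have hitail : i ∈ (p.dropUntil b hbj).support.tail := by
      rw [hq']; simp [support_cons]
    have hnd : p.support.Nodup := (upPath_isPath hT ρ j).support_nodup
    rw [support_take_drop' p hbj] at hnd
    have hdisj := (List.nodup_append'.mp hnd).2.2
    have hnotin : i ∉ (p.takeUntil b hbj).support := fun hin => hdisj hin hitail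
    rw [← upPath_prefix hT hbj] at hnotin
    have hw : ((upPath hT ρ b).concat hadj).IsPath := by
      rw [Walk.isPath_def, support_concat, List.nodup_append']
      exact ⟨(upPath_isPath hT ρ b).support_nodup, List.nodup_singleton _,
        fun a ha ha' => hnotin (by rwa [List.mem_singleton.mp ha'] at ha)⟩
    rw [← upPath_unique hT _ hw, support_concat]
    exact List.mem_append_left _ (end_mem_support _)
  · have : i ∈ (p.dropUntil b hbj).support := by
      rw [hq']; simp [support_cons]
    exact support_dropUntil_subset p hbj this

lemma exists_sep_path {b i i' j k : ι} (hne : i ≠ i')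
    (hadi : T.Adj b i) (hbi : b ∈ (upPath hT ρ i).support)
    (hadi' : T.Adj b i') (hbi' : b ∈ (upPath hT ρ i').support)
    (hij : i ∈ (upPath hT ρ j).support) (hik : i' ∈ (upPath hT ρ k).support) :
    ∃ p : T.Walk j k, p.IsPath ∧ b ∈ p.support := by
  have hbj : b ∈ (upPath hT ρ j).support := anc_trans hT hbi hij
  have hbk : b ∈ (upPath hT ρ k).support := anc_trans hT hbi' hik
  set pj := upPath hT ρ j with hpj
  set pk := upPath hT ρ k with hpk
  set qj := pj.dropUntil b hbj with hqj
  set qk := pk.dropUntil b hbk with hqk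
  have key : ∀ (ic jc : ι) (_ : T.Adj b ic) (hbic : b ∈ (upPath hT ρ ic).support)
      (hijc : ic ∈ (upPath hT ρ jc).support)
      (hbjc : b ∈ (upPath hT ρ jc).support),
      ∀ x ∈ ((upPath hT ρ jc).dropUntil b hbjc).support, x ≠ b →
        ic ∈ (upPath hT ρ x).support := by
    intro ic jc hadc hbic hijc hbjc x hx hxb
    have hxj : x ∈ (upPath hT ρ jc).support := support_dropUntil_subset _ _ hx
    have hxtail : x ∈ ((upPath hT ρ jc).dropUntil b hbjc).support.tail := by
      rw [support_eq_cons] at hx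
      rcases List.mem_cons.mp hx with h | h
      · exact absurd h hxb
      · exact h
    have hnd : (upPath hT ρ jc).support.Nodup := (upPath_isPath hT ρ jc).support_nodup
    rw [support_take_drop' _ hbjc] at hnd
    have hdisj := (List.nodup_append'.mp hnd).2.2
    have hxnb : x ∉ (upPath hT ρ b).support := by
      rw [upPath_prefix hT hbjc]
      exact fun hin => hdisj hin hxtail
    rcases anc_total hT hijc hxj with h | h
    · exact h
    · rw [support_upPath_child hT hadc hbic] at h
      rcases List.mem_append.mp h with h | h
      · exact absurd h hxnb
      · rw [List.mem_singleton.mp h]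
        exact end_mem_support _
  have hdisj2 : ∀ x, x ∈ qj.support → x ∈ qk.support → x = b := by
    intro x hxj hxk
    by_contra hxb
    have h1 := key i j hadi hbi hij hbj x hxj hxb
    have h2 := key i' k hadi' hbi' hik hbk x hxk hxb
    rcases anc_total hT h1 h2 with h | h
    · rw [support_upPath_child hT hadi' hbi'] at h
      rcases List.mem_append.mp h with h | h
      · exact hadi.ne (anc_antisymm hT h hbi).symm
      · exact hne (List.mem_singleton.mp h)
    · rw [support_upPath_child hT hadi hbi] at h
      rcases List.mem_append.mp h with h | h
      · exact absurd (anc_antisymm hT h hbi') hadi'.ne.symm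
      · exact hne (List.mem_singleton.mp h).symm
  refine ⟨qj.reverse.append qk, ?_, ?_⟩
  · rw [Walk.isPath_def, support_append, List.nodup_append']
    refine ⟨?_, ?_, ?_⟩
    · rw [support_reverse]
      exact List.nodup_reverse.mpr ((upPath_isPath hT ρ j).dropUntil hbj).support_nodup
    · exact ((upPath_isPath hT ρ k).dropUntil hbk).support_nodup.tail
    · intro a ha ha'
      rw [support_reverse, List.mem_reverse] at ha
      have hak : a ∈ qk.support := List.mem_of_mem_tail ha'
      have := hdisj2 a ha hak
      subst this
      have hnd : qk.support.Nodup := ((upPath_isPath hT ρ k).dropUntil hbk).support_nodup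
      rw [support_eq_cons] at hnd
      exact (List.nodup_cons.mp hnd).1 ha'
  · rw [support_append]
    apply List.mem_append_left
    rw [support_reverse, List.mem_reverse]
    exact start_mem_support _

lemma inSubtree_refl {i : ι} : InSubtree T ρ i i := fun p _ => p.end_mem_support

include hT in
lemma inSubtree_trans {b i j : ι} (hbi : InSubtree T ρ b i) (hij : InSubtree T ρ i j) :
    InSubtree T ρ b j := by
  rw [inSubtree_iff hT] at hbi hij ⊢
  exact anc_trans hT hbi hij

include hT in
lemma exists_isChild {b j : ι} (hbj : InSubtree T ρ b j) (hne : j ≠ b) :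
    ∃ i, IsChild T ρ b i ∧ InSubtree T ρ i j := by
  rw [inSubtree_iff hT] at hbj
  obtain ⟨i, hadj, hbi, hij⟩ := exists_child_aux hT hbj hne
  exact ⟨i, ⟨hadj, (inSubtree_iff hT).mpr hbi⟩, (inSubtree_iff hT).mpr hij⟩

include hT in
lemma exists_sep_path' {b i i' j k : ι} (hne : i ≠ i')
    (hi : IsChild T ρ b i) (hi' : IsChild T ρ b i')
    (hij : InSubtree T ρ i j) (hik : InSubtree T ρ i' k) :
    ∃ p : T.Walk j k, p.IsPath ∧ b ∈ p.support :=
  exists_sep_path hT hne hi.1 ((inSubtree_iff hT).mp hi.2) hi'.1 ((inSubtree_iff hT).mp hi'.2)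
    ((inSubtree_iff hT).mp hij) ((inSubtree_iff hT).mp hik)

end DTDWalkAux

open scoped Classical in
/-- Let `T` (rooted at `ρ`) be a dag tree decomposition of the dag `r`, `b` a bag, and
`φB` a homomorphism from the subgraph of `r` reachable from the bag of `b` to the dag
`s`. Then the homomorphisms from the subgraph reachable from the down-closure of `b`
extending `φB` are in bijection with the product, over the children `i` of `b`, of the
sets of homomorphisms from the subgraph reachable from the down-closure of `i`
extending `φB`; consequently the corresponding counts satisfy the product formula. -/
theorem dtd_hom_count_prod {V ι W : Type*} [Fintype V] [Fintype ι] [Fintype W]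
    (r : V → V → Prop) (hr : DigraphAcyclic r)
    (s : W → W → Prop) (hs : DigraphAcyclic s)
    (T : SimpleGraph ι) (bag : ι → Set V) (h : IsDTD r T bag) (ρ b : ι)
    (φB : ↥(Reach r (bag b)) → W)
    (hφB : ∀ u v : ↥(Reach r (bag b)), r u.1 v.1 → s (φB u) (φB v)) :
    Nonempty
      (↥{ψ : ↥(Reach r (DownClosure T ρ bag b)) → W |
          (∀ u v, r u.1 v.1 → s (ψ u) (ψ v)) ∧
          ∀ (x : V) (hx : x ∈ Reach r (bag b))
            (hx' : x ∈ Reach r (DownClosure T ρ bag b)),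
            ψ ⟨x, hx'⟩ = φB ⟨x, hx⟩} ≃
        ∀ i : {i : ι // IsChild T ρ b i},
          ↥{ψ : ↥(Reach r (DownClosure T ρ bag i.1)) → W |
            (∀ u v, r u.1 v.1 → s (ψ u) (ψ v)) ∧
            ∀ (x : V) (hx : x ∈ Reach r (bag b))
              (hx' : x ∈ Reach r (DownClosure T ρ bag i.1)),
              ψ ⟨x, hx'⟩ = φB ⟨x, hx⟩}) ∧
    {ψ : ↥(Reach r (DownClosure T ρ bag b)) → W |
        (∀ u v, r u.1 v.1 → s (ψ u) (ψ v)) ∧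
        ∀ (x : V) (hx : x ∈ Reach r (bag b))
          (hx' : x ∈ Reach r (DownClosure T ρ bag b)),
          ψ ⟨x, hx'⟩ = φB ⟨x, hx⟩}.ncard =
      ∏ i : {i : ι // IsChild T ρ b i},
        {ψ : ↥(Reach r (DownClosure T ρ bag i.1)) → W |
          (∀ u v, r u.1 v.1 → s (ψ u) (ψ v)) ∧
          ∀ (x : V) (hx : x ∈ Reach r (bag b))
            (hx' : x ∈ Reach r (DownClosure T ρ bag i.1)),
            ψ ⟨x, hx'⟩ = φB ⟨x, hx⟩}.ncard := by
  classical
  have hT := h.isTree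
  -- Reach basics
  have hreachDC : ∀ (c : ι) (x : V), x ∈ Reach r (DownClosure T ρ bag c) ↔
      ∃ j, InSubtree T ρ c j ∧ x ∈ Reach r (bag j) := by
    intro c x
    constructor
    · rintro ⟨u, hu, hru⟩
      simp only [DownClosure, Set.mem_iUnion, Set.mem_setOf_eq] at hu
      obtain ⟨j, hj, hu⟩ := hu
      exact ⟨j, hj, u, hu, hru⟩
    · rintro ⟨j, hj, u, hu, hru⟩
      refine ⟨u, ?_, hru⟩
      simp only [DownClosure, Set.mem_iUnion, Set.mem_setOf_eq]
      exact ⟨j, hj, hu⟩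
  have hreach_tail : ∀ {X : Set V} {x y : V}, x ∈ Reach r X → r x y → y ∈ Reach r X := by
    rintro X x y ⟨u, hu, hru⟩ hxy
    exact ⟨u, hu, hru.tail hxy⟩
  -- subtree facts
  have hsub : ∀ {i : ι}, IsChild T ρ b i →
      Reach r (DownClosure T ρ bag i) ⊆ Reach r (DownClosure T ρ bag b) := by
    intro i hi x hx
    rw [hreachDC] at hx ⊢
    obtain ⟨j, hj, hx⟩ := hx
    exact ⟨j, inSubtree_trans hT hi.2 hj, hx⟩
  have hRb : Reach r (bag b) ⊆ Reach r (DownClosure T ρ bag b) := by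
    intro x hx
    exact (hreachDC b x).mpr ⟨b, inSubtree_refl, hx⟩
  have hinter : ∀ {i i' : ι}, IsChild T ρ b i → IsChild T ρ b i' → i ≠ i' → ∀ x : V,
      x ∈ Reach r (DownClosure T ρ bag i) → x ∈ Reach r (DownClosure T ρ bag i') →
      x ∈ Reach r (bag b) := by
    intro i i' hi hi' hne x hx hx'
    rw [hreachDC] at hx hx'
    obtain ⟨j, hj, hx⟩ := hx
    obtain ⟨k, hk, hx'⟩ := hx'
    obtain ⟨p, hp, hbp⟩ := exists_sep_path' hT hne hi hi' hj hk
    exact h.path_prop b j k p hp hbp ⟨hx, hx'⟩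
  have hdecomp : ∀ (x : V), x ∈ Reach r (DownClosure T ρ bag b) → x ∉ Reach r (bag b) →
      ∃ ip : {i : ι // IsChild T ρ b i}, x ∈ Reach r (DownClosure T ρ bag ip.1) := by
    intro x hx hnx
    rw [hreachDC] at hx
    obtain ⟨j, hj, hx⟩ := hx
    have hjb : j ≠ b := by rintro rfl; exact hnx hx
    obtain ⟨i, hi, hij⟩ := exists_isChild hT hj hjb
    exact ⟨⟨i, hi⟩, (hreachDC i x).mpr ⟨j, hij, hx⟩⟩
  -- the two sets
  set Ch := {i : ι // IsChild T ρ b i} with hCh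
  set S : Set (↥(Reach r (DownClosure T ρ bag b)) → W) :=
    {ψ | (∀ u v, r u.1 v.1 → s (ψ u) (ψ v)) ∧
      ∀ (x : V) (hx : x ∈ Reach r (bag b))
        (hx' : x ∈ Reach r (DownClosure T ρ bag b)), ψ ⟨x, hx'⟩ = φB ⟨x, hx⟩} with hS
  set Si : (i : Ch) → Set (↥(Reach r (DownClosure T ρ bag i.1)) → W) := fun i =>
    {ψ | (∀ u v, r u.1 v.1 → s (ψ u) (ψ v)) ∧
      ∀ (x : V) (hx : x ∈ Reach r (bag b))
        (hx' : x ∈ Reach r (DownClosure T ρ bag i.1)), ψ ⟨x, hx'⟩ = φB ⟨x, hx⟩} with hSi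
  -- glue value
  let glVal : (∀ i : Ch, ↥(Si i)) → (x : V) → x ∈ Reach r (DownClosure T ρ bag b) → W :=
    fun Ψ x hx =>
      if hxb : x ∈ Reach r (bag b) then φB ⟨x, hxb⟩
      else (Ψ (hdecomp x hx hxb).choose).1 ⟨x, (hdecomp x hx hxb).choose_spec⟩
  have hglpos : ∀ (Ψ : ∀ i : Ch, ↥(Si i)) (x : V)
      (hx : x ∈ Reach r (DownClosure T ρ bag b)) (hxb : x ∈ Reach r (bag b)),
      glVal Ψ x hx = φB ⟨x, hxb⟩ := fun Ψ x hx hxb => dif_pos hxb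
  have hglneg : ∀ (Ψ : ∀ i : Ch, ↥(Si i)) (x : V)
      (hx : x ∈ Reach r (DownClosure T ρ bag b)) (hxb : x ∉ Reach r (bag b)),
      glVal Ψ x hx = (Ψ (hdecomp x hx hxb).choose).1 ⟨x, (hdecomp x hx hxb).choose_spec⟩ :=
    fun Ψ x hx hxb => dif_neg hxb
  have hcong : ∀ (Ψ : ∀ i : Ch, ↥(Si i)) (i₁ i₂ : Ch) (_ : i₁ = i₂) (x : V)
      (h1 : x ∈ Reach r (DownClosure T ρ bag i₁.1))
      (h2 : x ∈ Reach r (DownClosure T ρ bag i₂.1)),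
      (Ψ i₁).1 ⟨x, h1⟩ = (Ψ i₂).1 ⟨x, h2⟩ := by
    rintro Ψ i₁ _ rfl x h1 h2; rfl
  have hA : ∀ (Ψ : ∀ i : Ch, ↥(Si i)) (i : Ch) (x : V)
      (hx : x ∈ Reach r (DownClosure T ρ bag b))
      (hxi : x ∈ Reach r (DownClosure T ρ bag i.1)),
      glVal Ψ x hx = (Ψ i).1 ⟨x, hxi⟩ := by
    intro Ψ i x hx hxi
    by_cases hxb : x ∈ Reach r (bag b)
    · rw [hglpos Ψ x hx hxb]
      exact ((Ψ i).2.2 x hxb hxi).symm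
    · rw [hglneg Ψ x hx hxb]
      by_cases he : (hdecomp x hx hxb).choose = i
      · exact hcong Ψ _ i he x _ hxi
      · exact absurd
          (hinter (hdecomp x hx hxb).choose.2 i.2
            (fun hh => he (Subtype.ext hh)) x (hdecomp x hx hxb).choose_spec hxi)
          hxb
  have hGmem : ∀ Ψ : ∀ i : Ch, ↥(Si i),
      (fun x : ↥(Reach r (DownClosure T ρ bag b)) => glVal Ψ x.1 x.2) ∈ S := by
    intro Ψ
    constructor
    · intro u v huv
      show s (glVal Ψ u.1 u.2) (glVal Ψ v.1 v.2)
      obtain ⟨j, hj, hu⟩ := (hreachDC b u.1).mp u.2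
      have hv : v.1 ∈ Reach r (bag j) := hreach_tail hu huv
      by_cases hjb : j = b
      · subst hjb
        rw [hglpos Ψ u.1 u.2 hu, hglpos Ψ v.1 v.2 hv]
        exact hφB ⟨u.1, hu⟩ ⟨v.1, hv⟩ huv
      · obtain ⟨i, hi, hij⟩ := exists_isChild hT hj hjb
        have hui : u.1 ∈ Reach r (DownClosure T ρ bag i) := (hreachDC i _).mpr ⟨j, hij, hu⟩
        have hvi : v.1 ∈ Reach r (DownClosure T ρ bag i) := (hreachDC i _).mpr ⟨j, hij, hv⟩
        rw [hA Ψ ⟨i, hi⟩ u.1 u.2 hui, hA Ψ ⟨i, hi⟩ v.1 v.2 hvi]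
        exact (Ψ ⟨i, hi⟩).2.1 ⟨u.1, hui⟩ ⟨v.1, hvi⟩ huv
    · intro x hx hx'
      exact hglpos Ψ x hx' hx
  let F : ↥S → ∀ i : Ch, ↥(Si i) := fun ψ i =>
    ⟨fun y => ψ.1 ⟨y.1, hsub i.2 y.2⟩,
      fun u v huv => ψ.2.1 ⟨u.1, hsub i.2 u.2⟩ ⟨v.1, hsub i.2 v.2⟩ huv,
      fun x hx hx' => ψ.2.2 x hx (hsub i.2 hx')⟩
  let G : (∀ i : Ch, ↥(Si i)) → ↥S := fun Ψ => ⟨_, hGmem Ψ⟩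
  have e : ↥S ≃ ∀ i : Ch, ↥(Si i) := by
    refine ⟨F, G, ?_, ?_⟩
    · intro ψ
      apply Subtype.ext
      funext x
      show glVal (F ψ) x.1 x.2 = ψ.1 x
      by_cases hxb : x.1 ∈ Reach r (bag b)
      · rw [hglpos (F ψ) x.1 x.2 hxb]
        exact (ψ.2.2 x.1 hxb x.2).symm
      · rw [hglneg (F ψ) x.1 x.2 hxb]
    · intro Ψ
      funext i
      apply Subtype.ext
      funext y
      show glVal Ψ y.1 (hsub i.2 y.2) = (Ψ i).1 y
      exact hA Ψ i y.1 (hsub i.2 y.2) y.2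
  refine ⟨⟨e⟩, ?_⟩
  calc S.ncard = Nat.card ↥S := (Nat.card_coe_set_eq _).symm
    _ = Nat.card (∀ i : Ch, ↥(Si i)) := Nat.card_congr e
    _ = ∏ i : Ch, Nat.card ↥(Si i) := Nat.card_pi
    _ = ∏ i : Ch, (Si i).ncard := by
      refine Finset.prod_congr rfl fun i _ => ?_
      exact Nat.card_coe_set_eq _
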